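/- If R_e := τ(pδ + 1 − p) ≤ 1 with p ∈ (0,1), δ ∈ (0,1), τ > 0, then z = 0 is the only solution in [0,1) of the final-size equation 1 − z = p·exp(−δτz) + (1−p)·exp(−τz). -/
import Mathlib


theorem stmt_1 (p δ τ : ℝ) (hp : p ∈ Set.Ioo (0:ℝ) 1) (hδ : δ ∈ Set.Ioo (0:ℝ) 1)
    (hτ : 0 < τ) (hRe : τ * (p * δ + 1 - p) ≤ 1) :
    ∀ z ∈ Set.Ico (0:ℝ) 1,
      (1 - z = p * Real.exp (-(δ * τ * z)) + (1 - p) * Real.exp (-(τ * z))) ↔ z = 0 := by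
  obtain ⟨hp0, hp1⟩ := hp
  obtain ⟨hδ0, hδ1⟩ := hδ
  rintro z ⟨hz0, hz1⟩
  constructor
  · intro heq
    by_contra hz
    have hzpos : 0 < z := lt_of_le_of_ne hz0 (Ne.symm hz)
    have h1 : -(δ * τ * z) + 1 < Real.exp (-(δ * τ * z)) :=
      Real.add_one_lt_exp (by intro h; nlinarith [mul_pos (mul_pos hδ0 hτ) hzpos, mul_pos hτ hzpos])
    have h2 : -(τ * z) + 1 < Real.exp (-(τ * z)) :=
      Real.add_one_lt_exp (by intro h; nlinarith [mul_pos (mul_pos hδ0 hτ) hzpos, mul_pos hτ hzpos])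
    nlinarith [mul_lt_mul_of_pos_left h1 hp0,
      mul_lt_mul_of_pos_left h2 (by linarith : (0:ℝ) < 1 - p),
      mul_le_of_le_one_left hz0 hRe, hzpos]
  · rintro rfl
    simp
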